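/- Let R and R' be bounded normal operators on a complex Hilbert space H. Then the Hausdorff distance between their spectra satisfies d_H(σ(R), σ(R')) ≤ ‖R − R'‖, where ‖·‖ is the operator norm. -/

import Mathlib

open Metric

section Aux

variable {A : Type*} [CStarAlgebra A]

/-- `z•1 - a` is normal when `a` is. -/
lemma isStarNormal_algebraMap_sub (z : ℂ) (a : A) (ha : IsStarNormal a) :
    IsStarNormal (algebraMap ℂ A z - a) := by
  constructor
  have hc : ∀ y : A, Commute (star (algebraMap ℂ A z)) y := fun y => by
    simpa using (Algebra.commute_algebraMap_left z (star y)).star_star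
  rw [star_sub]
  exact ((hc _).sub_right (hc a)).sub_left
    (((Algebra.commute_algebraMap_left z (star a)).symm).sub_right ha.star_comm_self)

/-- The inverse of a normal unit is normal. -/
lemma isStarNormal_units_inv (u : Aˣ) (hu : IsStarNormal (u : A)) :
    IsStarNormal ((u⁻¹ : Aˣ) : A) := by
  constructor
  have h : Commute ((star u : Aˣ) : A) (u : A) := by
    simpa using hu.star_comm_self
  have := (h.units_inv_left).units_inv_right
  simpa using this

/-- Key half of spectral variation for normal elements: every point of the spectrum of `b`
is within `‖b - a‖` of the spectrum of the normal element `a`. -/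
lemma infDist_spectrum_le (a b : A) (ha : IsStarNormal a) {z : ℂ}
    (hz : z ∈ spectrum ℂ b) :
    Metric.infDist z (spectrum ℂ a) ≤ ‖b - a‖ := by
  by_contra h
  push_neg at h
  set d := Metric.infDist z (spectrum ℂ a) with hd_def
  have hd : 0 < d := lt_of_le_of_lt (norm_nonneg _) h
  have hz_not : z ∉ spectrum ℂ a := fun hmem => by
    simp [hd_def, Metric.infDist_zero_of_mem hmem] at hd
  rw [spectrum.notMem_iff] at hz_not
  obtain ⟨u, hu⟩ := hz_not
  have hnorm_u : IsStarNormal ((u : A)) := hu ▸ isStarNormal_algebraMap_sub z a ha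
  haveI hnorm_inv : IsStarNormal (((u⁻¹ : Aˣ)) : A) := isStarNormal_units_inv u hnorm_u
  -- bound each spectral point of u⁻¹
  have hspec : ∀ μ ∈ spectrum ℂ ((u⁻¹ : Aˣ) : A), ‖μ‖ ≤ d⁻¹ := by
    intro μ hμ
    have hμ0 : μ ≠ 0 := fun h0 => spectrum.zero_notMem ℂ (u⁻¹).isUnit (h0 ▸ hμ)
    have : ((Units.mk0 μ hμ0 : ℂˣ) : ℂ) ∈ spectrum ℂ ((u⁻¹ : Aˣ) : A) := hμ
    have hinv : (((Units.mk0 μ hμ0)⁻¹ : ℂˣ) : ℂ) ∈ spectrum ℂ (((u⁻¹)⁻¹ : Aˣ) : A) :=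
      spectrum.inv_mem_iff.mp this
    simp only [inv_inv] at hinv
    have hμinv : μ⁻¹ ∈ spectrum ℂ ((u : A)) := by simpa using hinv
    rw [hu, ← spectrum.singleton_sub_eq] at hμinv
    obtain ⟨x, hx, y, hy, hxy⟩ := hμinv
    obtain rfl : x = z := by simpa using hx
    have hdist : d ≤ ‖μ⁻¹‖ := by
      rw [← hxy, ← dist_eq_norm]
      exact Metric.infDist_le_dist_of_mem hy
    rw [norm_inv] at hdist
    calc ‖μ‖ = (‖μ‖⁻¹)⁻¹ := by rw [inv_inv]
      _ ≤ d⁻¹ := inv_anti₀ hd hdist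
  -- norm bound on u⁻¹ via spectral radius
  have hnorm_le : ‖((u⁻¹ : Aˣ) : A)‖ ≤ d⁻¹ := by
    have h1 : spectralRadius ℂ ((u⁻¹ : Aˣ) : A) ≤ ENNReal.ofReal d⁻¹ := by
      rw [spectralRadius]
      refine iSup₂_le fun μ hμ => ?_
      rw [← enorm_eq_nnnorm, ← ofReal_norm]
      exact ENNReal.ofReal_le_ofReal (hspec μ hμ)
    have h2 := IsStarNormal.spectralRadius_eq_nnnorm ((u⁻¹ : Aˣ) : A)
    rw [h2, ← enorm_eq_nnnorm, ← ofReal_norm] at h1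
    exact (ENNReal.ofReal_le_ofReal_iff (by positivity)).mp h1
  -- show z ∉ spectrum b, contradiction
  have hlt : ‖((u⁻¹ : Aˣ) : A) * (b - a)‖ < 1 := by
    calc ‖((u⁻¹ : Aˣ) : A) * (b - a)‖ ≤ ‖((u⁻¹ : Aˣ) : A)‖ * ‖b - a‖ := norm_mul_le _ _
      _ ≤ d⁻¹ * ‖b - a‖ := mul_le_mul_of_nonneg_right hnorm_le (norm_nonneg _)
      _ < d⁻¹ * d := mul_lt_mul_of_pos_left h (inv_pos.mpr hd)
      _ = 1 := inv_mul_cancel₀ hd.ne'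
  have hunit : IsUnit (algebraMap ℂ A z - b) := by
    have heq : algebraMap ℂ A z - b = (u : A) * (1 - ((u⁻¹ : Aˣ) : A) * (b - a)) := by
      rw [mul_sub, mul_one, ← mul_assoc, Units.mul_inv, one_mul, hu]
      abel
    rw [heq]
    exact u.isUnit.mul (Units.oneSub _ hlt).isUnit
  exact (spectrum.notMem_iff.mpr hunit) hz

end Aux

/-- For bounded normal operators `R, R'` on a complex Hilbert space, the Hausdorff
distance between their spectra is bounded by the operator norm of their difference. -/
theorem stmt4 {H : Type*} [NormedAddCommGroup H] [InnerProductSpace ℂ H] [CompleteSpace H]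
    (R R' : H →L[ℂ] H) (hR : IsStarNormal R) (hR' : IsStarNormal R') :
    Metric.hausdorffDist (spectrum ℂ R) (spectrum ℂ R') ≤ ‖R - R'‖ := by
  refine Metric.hausdorffDist_le_of_infDist (norm_nonneg _) ?_ ?_
  · intro z hz
    exact infDist_spectrum_le R' R hR' hz
  · intro z hz
    simpa [norm_sub_rev] using infDist_spectrum_le R R' hR hz
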